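/- Let G be a group, V a finite-dimensional vector space over ℚ_ℓ with a linear G-action, and T a G-stable ℤ_ℓ-lattice in V. Then V^G ≠ 0 if and only if the G-fixed subgroup (V/T)^G is infinite. -/

import Mathlib

open Filter Topology

section Aux

variable {ℓ : ℕ} [Fact ℓ.Prime] {G : Type*} [Group G]
    {V : Type*} [AddCommGroup V] [Module ℚ_[ℓ] V] [FiniteDimensional ℚ_[ℓ] V]
    [Module ℤ_[ℓ] V] [IsScalarTower ℤ_[ℓ] ℚ_[ℓ] V]

private lemma zsmul_eq' (z : ℤ_[ℓ]) (v : V) : z • v = (z : ℚ_[ℓ]) • v := by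
  rw [← PadicInt.algebraMap_apply, algebraMap_smul]

/-- Finiteness of the set of classes mod `T` of elements of norm at most `ℓ^n`. -/
private lemma finiteK {ι : Type*} [Fintype ι] (e : V ≃ₗ[ℚ_[ℓ]] (ι → ℚ_[ℓ]))
    (T : Submodule ℤ_[ℓ] V)
    (hL : ∀ v : V, (∀ i, ‖e v i‖ ≤ 1) → v ∈ T) (n : ℕ) :
    Set.Finite {q : V ⧸ T.toAddSubgroup | ∃ v : V, ‖e v‖ ≤ (ℓ:ℝ)^n ∧
      (QuotientAddGroup.mk v : V ⧸ T.toAddSubgroup) = q} := by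
  classical
  haveI : NeZero (ℓ ^ n) := ⟨pow_ne_zero n (Fact.out (p := ℓ.Prime)).ne_zero⟩
  have hp : (0:ℝ) < (ℓ:ℝ) := by exact_mod_cast (Fact.out (p := ℓ.Prime)).pos
  set K := {q : V ⧸ T.toAddSubgroup | ∃ v : V, ‖e v‖ ≤ (ℓ:ℝ)^n ∧
      (QuotientAddGroup.mk v : V ⧸ T.toAddSubgroup) = q} with hK
  have coordbd : ∀ (v : V), ‖e v‖ ≤ (ℓ:ℝ)^n → ∀ i, ‖(ℓ:ℚ_[ℓ])^n * e v i‖ ≤ 1 := by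
    intro v hv i
    have h1 : ‖e v i‖ ≤ (ℓ:ℝ)^n := le_trans (norm_le_pi_norm (e v) i) hv
    rw [norm_mul, norm_pow, Padic.norm_p]
    calc (ℓ:ℝ)⁻¹^n * ‖e v i‖ ≤ (ℓ:ℝ)⁻¹^n * (ℓ:ℝ)^n :=
          mul_le_mul_of_nonneg_left h1 (by positivity)
      _ = 1 := by rw [← mul_pow, inv_mul_cancel₀ hp.ne', one_pow]
  set F : K → (ι → ZMod (ℓ ^ n)) := fun q i =>
    PadicInt.toZModPow n ⟨(ℓ:ℚ_[ℓ])^n * e (Classical.choose q.2) i,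
      coordbd _ (Classical.choose_spec q.2).1 i⟩ with hF
  have hinj : Function.Injective F := by
    intro q₁ q₂ h
    obtain ⟨h₁, hq₁⟩ := Classical.choose_spec q₁.2
    obtain ⟨h₂, hq₂⟩ := Classical.choose_spec q₂.2
    set v₁ := Classical.choose q₁.2 with hv₁
    set v₂ := Classical.choose q₂.2 with hv₂
    have hsub : v₁ - v₂ ∈ T := by
      apply hL
      intro i
      have hcf := congrFun h i
      simp only [hF] at hcf
      set x₁ : ℤ_[ℓ] := ⟨(ℓ:ℚ_[ℓ])^n * e v₁ i, coordbd _ h₁ i⟩ with hx₁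
      set x₂ : ℤ_[ℓ] := ⟨(ℓ:ℚ_[ℓ])^n * e v₂ i, coordbd _ h₂ i⟩ with hx₂
      have hker : ‖x₁ - x₂‖ ≤ (ℓ:ℝ)^(-n:ℤ) := by
        rw [PadicInt.norm_le_pow_iff_mem_span_pow, ← PadicInt.ker_toZModPow,
          RingHom.mem_ker, map_sub, hcf, sub_self]
      have hcoe : ((x₁ - x₂ : ℤ_[ℓ]) : ℚ_[ℓ]) = (ℓ:ℚ_[ℓ])^n * (e v₁ i - e v₂ i) := by
        rw [PadicInt.coe_sub]
        push_cast [hx₁, hx₂]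
        ring
      rw [PadicInt.norm_def, hcoe, norm_mul, norm_pow, Padic.norm_p] at hker
      have hker' : ‖e v₁ i - e v₂ i‖ * (ℓ:ℝ)⁻¹^n ≤ 1 * (ℓ:ℝ)⁻¹^n := by
        rw [one_mul, mul_comm]
        calc (ℓ:ℝ)⁻¹^n * ‖e v₁ i - e v₂ i‖ ≤ (ℓ:ℝ)^(-n:ℤ) := hker
          _ = (ℓ:ℝ)⁻¹^n := by rw [zpow_neg, zpow_natCast, inv_pow]
      have h3 : ‖e v₁ i - e v₂ i‖ ≤ 1 :=
        le_of_mul_le_mul_right hker' (by positivity)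
      have h4 : e (v₁ - v₂) i = e v₁ i - e v₂ i := by rw [map_sub]; rfl
      rw [h4]; exact h3
    apply Subtype.ext
    rw [← hq₁, ← hq₂]
    exact QuotientAddGroup.eq_iff_sub_mem.mpr ((Submodule.mem_toAddSubgroup T).mpr hsub)
  exact Set.finite_coe_iff.mp (Finite.of_injective F hinj)

private lemma backward' {ι : Type*} [Fintype ι] (e : V ≃ₗ[ℚ_[ℓ]] (ι → ℚ_[ℓ]))
    (ρ : Representation ℚ_[ℓ] G V) (T : Submodule ℤ_[ℓ] V)
    (hL : ∀ v : V, (∀ i, ‖e v i‖ ≤ 1) → v ∈ T)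
    (a : ℕ) (hU : ∀ v ∈ T, ‖e v‖ ≤ (ℓ:ℝ)^a)
    (hinf : Set.Infinite (QuotientAddGroup.mk (s := T.toAddSubgroup) ''
      {v : V | ∀ g : G, ρ g v - v ∈ T})) :
    ∃ v : V, v ≠ 0 ∧ ∀ g : G, ρ g v = v := by
  have hp : (1:ℝ) < (ℓ:ℝ) := by exact_mod_cast (Fact.out (p := ℓ.Prime)).one_lt
  have hp0 : (0:ℝ) < (ℓ:ℝ) := lt_trans one_pos hp
  have key : ∀ n : ℕ, ∃ u : V, ‖e u‖ = 1 ∧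
      ∀ g : G, ‖e (ρ g u - u)‖ ≤ (ℓ:ℝ)^a * ((ℓ:ℝ)⁻¹)^n := by
    intro n
    have hv : ∃ v : V, (∀ g : G, ρ g v - v ∈ T) ∧ (ℓ:ℝ)^n < ‖e v‖ := by
      by_contra hc
      push_neg at hc
      apply hinf
      apply (finiteK e T hL n).subset
      rintro q ⟨v, hvS, rfl⟩
      exact ⟨v, hc v hvS, rfl⟩
    obtain ⟨v, hvS, hvn⟩ := hv
    have hv0 : (0:ℝ) < ‖e v‖ := lt_of_le_of_lt (by positivity) hvn
    haveI : Nonempty ι := by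
      by_contra hne
      rw [not_nonempty_iff] at hne
      have h0 : e v = 0 := Subsingleton.elim _ _
      rw [h0, norm_zero] at hv0; exact lt_irrefl _ hv0
    obtain ⟨i, -, hi⟩ := Finset.exists_mem_eq_sup (Finset.univ : Finset ι)
      Finset.univ_nonempty (fun i => ‖e v i‖₊)
    have hnorm_i : ‖e v‖ = ‖e v i‖ := by rw [Pi.norm_def, hi]; rfl
    have hvi0 : e v i ≠ 0 := by
      intro h0; rw [hnorm_i, h0, norm_zero] at hv0; exact lt_irrefl _ hv0
    set m : ℤ := -(e v i).valuation with hm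
    have hval : ‖e v‖ = (ℓ:ℝ)^m := by rw [hnorm_i]; exact Padic.norm_eq_zpow_neg_valuation hvi0
    have hnm : (n:ℤ) < m := by
      rw [hval] at hvn
      have h2 : (ℓ:ℝ)^((n:ℤ)) < (ℓ:ℝ)^m := by rwa [zpow_natCast]
      exact (zpow_lt_zpow_iff_right₀ hp).mp h2
    have hsm : ∀ w : V, ‖e ((ℓ:ℚ_[ℓ])^m • w)‖ = ((ℓ:ℝ)^m)⁻¹ * ‖e w‖ := by
      intro w
      rw [map_smul, norm_smul, norm_zpow, Padic.norm_p, inv_zpow]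
    refine ⟨(ℓ:ℚ_[ℓ])^m • v, ?_, ?_⟩
    · rw [hsm, hval, inv_mul_cancel₀ (zpow_ne_zero _ hp0.ne')]
    · intro g
      have hrw : ρ g ((ℓ:ℚ_[ℓ])^m • v) - (ℓ:ℚ_[ℓ])^m • v = (ℓ:ℚ_[ℓ])^m • (ρ g v - v) := by
        rw [map_smul, smul_sub]
      rw [hrw, hsm]
      have hmn : ((ℓ:ℝ)^m)⁻¹ ≤ ((ℓ:ℝ)⁻¹)^n := by
        rw [inv_pow, ← zpow_natCast (ℓ:ℝ) n]
        exact inv_anti₀ (zpow_pos hp0 _) (zpow_le_zpow_right₀ hp.le hnm.le)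
      calc ((ℓ:ℝ)^m)⁻¹ * ‖e (ρ g v - v)‖ ≤ ((ℓ:ℝ)⁻¹)^n * (ℓ:ℝ)^a := by
            apply mul_le_mul hmn (hU _ (hvS g)) (norm_nonneg _) (by positivity)
        _ = (ℓ:ℝ)^a * ((ℓ:ℝ)⁻¹)^n := mul_comm _ _
  choose u hu1 hu2 using key
  set xs : ℕ → (ι → ℚ_[ℓ]) := fun n => e (u n) with hxs
  have hsph : ∀ n, xs n ∈ Metric.sphere (0 : ι → ℚ_[ℓ]) 1 := fun n => by
    rw [mem_sphere_zero_iff_norm]; exact hu1 n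
  obtain ⟨x, hx, φ, hφ, hconv⟩ := (isCompact_sphere (0 : ι → ℚ_[ℓ]) 1).tendsto_subseq hsph
  have hx1 : ‖x‖ = 1 := mem_sphere_zero_iff_norm.mp hx
  have hx0 : x ≠ 0 := by intro h0; rw [h0, norm_zero] at hx1; norm_num at hx1
  refine ⟨e.symm x, ?_, ?_⟩
  · intro h0
    exact hx0 (by rw [← e.apply_symm_apply x, h0, map_zero])
  · intro g
    set L : (ι → ℚ_[ℓ]) →ₗ[ℚ_[ℓ]] (ι → ℚ_[ℓ]) :=
      e.toLinearMap ∘ₗ (ρ g) ∘ₗ e.symm.toLinearMap with hLdef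
    have hcont : Continuous L := L.continuous_of_finiteDimensional
    have hLxs : ∀ k, L (xs k) - xs k = e (ρ g (u k) - u k) := by
      intro k
      rw [map_sub]
      congr 1
      simp [hLdef, hxs]
    have h1 : Tendsto (fun k => L (xs (φ k)) - xs (φ k)) atTop (𝓝 (L x - x)) :=
      (((hcont.tendsto x).comp hconv).sub hconv)
    have hb : Tendsto (fun k : ℕ => (ℓ:ℝ)^a * ((ℓ:ℝ)⁻¹)^k) atTop (𝓝 0) := by
      have h0 : Tendsto (fun k : ℕ => ((ℓ:ℝ)⁻¹)^k) atTop (𝓝 0) :=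
        tendsto_pow_atTop_nhds_zero_of_lt_one (by positivity)
          (by rw [inv_lt_one₀ hp0]; exact hp)
      simpa using h0.const_mul ((ℓ:ℝ)^a)
    have h2 : Tendsto (fun k => L (xs (φ k)) - xs (φ k)) atTop (𝓝 0) := by
      apply squeeze_zero_norm (a := fun k => (ℓ:ℝ)^a * ((ℓ:ℝ)⁻¹)^(φ k))
      · intro k
        rw [hLxs]
        exact hu2 (φ k) g
      · exact hb.comp hφ.tendsto_atTop
    have hzero : L x - x = 0 := tendsto_nhds_unique h1 h2
    have hLx : L x = x := sub_eq_zero.mp hzero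
    apply e.injective
    rw [e.apply_symm_apply]
    calc e (ρ g (e.symm x)) = L x := by simp [hLdef]
      _ = x := hLx

private lemma forward' {ι : Type*} [Fintype ι] (e : V ≃ₗ[ℚ_[ℓ]] (ι → ℚ_[ℓ]))
    (ρ : Representation ℚ_[ℓ] G V) (T : Submodule ℤ_[ℓ] V)
    (a : ℕ) (hU : ∀ w ∈ T, ‖e w‖ ≤ (ℓ:ℝ)^a)
    (v : V) (hv0 : v ≠ 0) (hfix : ∀ g : G, ρ g v = v) :
    Set.Infinite (QuotientAddGroup.mk (s := T.toAddSubgroup) ''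
      {w : V | ∀ g : G, ρ g w - w ∈ T}) := by
  have hp : (1:ℝ) < (ℓ:ℝ) := by exact_mod_cast (Fact.out (p := ℓ.Prime)).one_lt
  have hp0 : (0:ℝ) < (ℓ:ℝ) := lt_trans one_pos hp
  have hl2 : (2:ℝ) ≤ (ℓ:ℝ) := by exact_mod_cast (Fact.out (p := ℓ.Prime)).two_le
  have hc : 0 < ‖e v‖ := by
    rw [norm_pos_iff]
    intro h0
    exact hv0 (by rw [← e.symm_apply_apply v, h0, map_zero])
  obtain ⟨N, hN⟩ := pow_unbounded_of_one_lt ((ℓ:ℝ)^a / ‖e v‖) hp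
  have hN' : (ℓ:ℝ)^a < (ℓ:ℝ)^N * ‖e v‖ := by
    rw [div_lt_iff₀ hc] at hN
    linarith [hN]
  set w : ℕ → V := fun n => (ℓ:ℚ_[ℓ])^(-((N:ℤ)+n)) • v with hw
  have hmem : ∀ n, w n ∈ {u : V | ∀ g : G, ρ g u - u ∈ T} := by
    intro n g
    show ρ g (w n) - w n ∈ T
    rw [hw]
    simp only []
    rw [map_smul, hfix g, sub_self]
    exact T.zero_mem
  have hnc : ∀ k : ℕ, ‖(ℓ:ℚ_[ℓ])^(-((N:ℤ)+k))‖ = (ℓ:ℝ)^((N:ℤ)+k) := by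
    intro k
    rw [norm_zpow, Padic.norm_p, inv_zpow, ← zpow_neg, neg_neg]
  have hdiff : ∀ {n m : ℕ}, n < m → w n - w m ∉ T := by
    intro n m hnm hT
    have h1 := hU _ hT
    have hsplit : e (w n - w m) =
        ((ℓ:ℚ_[ℓ])^(-((N:ℤ)+n)) - (ℓ:ℚ_[ℓ])^(-((N:ℤ)+m))) • e v := by
      rw [hw]
      simp only []
      rw [map_sub, map_smul, map_smul, sub_smul]
    rw [hsplit, norm_smul] at h1
    have hge : (ℓ:ℝ)^(N:ℤ) ≤ ‖(ℓ:ℚ_[ℓ])^(-((N:ℤ)+n)) - (ℓ:ℚ_[ℓ])^(-((N:ℤ)+m))‖ := by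
      have h2 : ‖(ℓ:ℚ_[ℓ])^(-((N:ℤ)+m))‖ - ‖(ℓ:ℚ_[ℓ])^(-((N:ℤ)+n))‖ ≤
          ‖(ℓ:ℚ_[ℓ])^(-((N:ℤ)+n)) - (ℓ:ℚ_[ℓ])^(-((N:ℤ)+m))‖ := by
        rw [norm_sub_rev]
        exact norm_sub_norm_le _ _
      rw [hnc n, hnc m] at h2
      refine le_trans ?_ h2
      have e1 : (ℓ:ℝ)^((N:ℤ)+n) + (ℓ:ℝ)^(N:ℤ) ≤ (ℓ:ℝ)^((N:ℤ)+m) := by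
        calc (ℓ:ℝ)^((N:ℤ)+n) + (ℓ:ℝ)^(N:ℤ)
            ≤ (ℓ:ℝ)^((N:ℤ)+n) + (ℓ:ℝ)^((N:ℤ)+n) := by
              have := zpow_le_zpow_right₀ hp.le (show (N:ℤ) ≤ (N:ℤ)+n by omega)
              linarith
          _ = 2 * (ℓ:ℝ)^((N:ℤ)+n) := by ring
          _ ≤ (ℓ:ℝ) * (ℓ:ℝ)^((N:ℤ)+n) :=
              mul_le_mul_of_nonneg_right hl2 (zpow_pos hp0 _).le
          _ = (ℓ:ℝ)^((N:ℤ)+n+1) := by rw [zpow_add_one₀ hp0.ne']; ring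
          _ ≤ (ℓ:ℝ)^((N:ℤ)+m) :=
              zpow_le_zpow_right₀ hp.le (by omega)
      linarith
    have hfin : (ℓ:ℝ)^(N:ℤ) * ‖e v‖ ≤ (ℓ:ℝ)^a :=
      le_trans (mul_le_mul_of_nonneg_right hge (norm_nonneg _)) h1
    rw [zpow_natCast] at hfin
    linarith
  apply Set.infinite_of_injective_forall_mem
    (f := fun n : ℕ => (QuotientAddGroup.mk (w n) : V ⧸ T.toAddSubgroup))
  · intro n m hq
    by_contra hne
    rcases lt_or_gt_of_ne hne with h' | h'
    · exact hdiff h' ((Submodule.mem_toAddSubgroup T).mp (QuotientAddGroup.eq_iff_sub_mem.mp hq))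
    · exact hdiff h' ((Submodule.mem_toAddSubgroup T).mp (QuotientAddGroup.eq_iff_sub_mem.mp hq.symm))
  · intro n
    exact ⟨w n, hmem n, rfl⟩

end Aux

/-- Lemma 2.1: V^G ≠ 0 iff (V/T)^G is infinite, for a G-stable ℤ_ℓ-lattice T
in a finite-dimensional ℚ_ℓ-vector space V with linear G-action. -/
theorem stmt0 {ℓ : ℕ} [Fact ℓ.Prime] {G : Type*} [Group G]
    {V : Type*} [AddCommGroup V] [Module ℚ_[ℓ] V] [FiniteDimensional ℚ_[ℓ] V]
    [Module ℤ_[ℓ] V] [IsScalarTower ℤ_[ℓ] ℚ_[ℓ] V]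
    (ρ : Representation ℚ_[ℓ] G V)
    (T : Submodule ℤ_[ℓ] V) (hTfg : T.FG)
    (hTspan : Submodule.span ℚ_[ℓ] (T : Set V) = ⊤)
    (hTstab : ∀ g : G, ∀ x ∈ T, ρ g x ∈ T) :
    (∃ v : V, v ≠ 0 ∧ ∀ g : G, ρ g v = v) ↔
      Set.Infinite
        (QuotientAddGroup.mk (s := T.toAddSubgroup) ''
          {v : V | ∀ g : G, ρ g v - v ∈ T}) := by
  classical
  have hp : (1:ℝ) < (ℓ:ℝ) := by exact_mod_cast (Fact.out (p := ℓ.Prime)).one_lt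
  obtain ⟨s, hsT, hspan, hli⟩ := exists_linearIndependent ℚ_[ℓ] (T : Set V)
  haveI : Finite ↥s := hli.finite
  haveI : Fintype ↥s := Fintype.ofFinite _
  set C : Module.Basis ↥s ℚ_[ℓ] V :=
    Module.Basis.mk hli (by rw [Subtype.range_coe, hspan, hTspan]) with hC
  set e := C.equivFun with he
  have hCi : ∀ i : ↥s, (C i : V) ∈ T := by
    intro i
    rw [hC, Module.Basis.mk_apply]
    exact hsT i.2
  have hL : ∀ v : V, (∀ i, ‖e v i‖ ≤ 1) → v ∈ T := by
    intro v hv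
    have hrepr : ∑ i, e v i • C i = v := C.sum_equivFun v
    rw [← hrepr]
    refine Submodule.sum_mem T fun i _ => ?_
    have h2 := T.smul_mem (⟨e v i, hv i⟩ : ℤ_[ℓ]) (hCi i)
    rw [zsmul_eq' (⟨e v i, hv i⟩ : ℤ_[ℓ]) (C i)] at h2
    exact h2
  obtain ⟨t, ht⟩ := hTfg
  have hbd : ∀ v ∈ T, ‖e v‖ ≤ ∑ x ∈ t, ‖e x‖ := by
    intro v hv
    rw [← ht] at hv
    obtain ⟨f, -, hf⟩ := Submodule.mem_span_finset.mp hv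
    rw [← hf]
    have h1 : e (∑ i ∈ t, f i • i) = ∑ i ∈ t, ((f i : ℚ_[ℓ])) • e i := by
      rw [map_sum]
      exact Finset.sum_congr rfl fun i _ => by rw [zsmul_eq', map_smul]
    rw [h1]
    refine le_trans (norm_sum_le _ _) (Finset.sum_le_sum fun i _ => ?_)
    rw [norm_smul]
    refine mul_le_of_le_one_left (norm_nonneg _) ?_
    rw [← PadicInt.norm_def]
    exact PadicInt.norm_le_one (f i)
  obtain ⟨a, ha⟩ := pow_unbounded_of_one_lt (∑ x ∈ t, ‖e x‖) hp
  have hU : ∀ v ∈ T, ‖e v‖ ≤ (ℓ:ℝ)^a := fun v hv => le_trans (hbd v hv) ha.le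
  constructor
  · rintro ⟨v, hv0, hfix⟩
    exact forward' e ρ T a hU v hv0 hfix
  · intro hinf
    exact backward' e ρ T hL a hU hinf
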